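/- For the generalized Curie-Weiss-Potts model, lim_{z → z_β} ‖g^r(z) − g^r(z_β)‖₁ / ‖z − z_β‖₁ = β(r−1)/q^{r−1}, where z_β = (1/q,...,1/q) and the limit is taken over z ∈ P, z ≠ z_β. -/

import Mathlib

open Filter

/-- For the generalized Curie-Weiss-Potts model,
`‖g^r(z) − g^r(z_β)‖₁ / ‖z − z_β‖₁ → β(r−1)/q^{r−1}` as `z → z_β` within the
simplex, `z ≠ z_β`, where `z_β = (1/q,...,1/q)` (and `g^r(z_β) = z_β`). -/
theorem gcwp_local_lipschitz_limit
    (q r : ℕ) (hq : 2 ≤ q) (hr : 2 ≤ r) (β : ℝ) (hβ : 0 < β) :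
    let P : Set (Fin q → ℝ) := {ν | (∀ k, 0 ≤ ν k) ∧ ∑ k, ν k = 1}
    let g : (Fin q → ℝ) → (Fin q → ℝ) := fun z k =>
      Real.exp (β * z k ^ (r - 1)) / ∑ j, Real.exp (β * z j ^ (r - 1))
    let zβ : Fin q → ℝ := fun _ => 1 / q
    Tendsto
      (fun z : Fin q → ℝ => (∑ k, |g z k - g zβ k|) / (∑ k, |z k - zβ k|))
      (nhdsWithin zβ (P \ {zβ}))
      (nhds (β * (r - 1) / q ^ (r - 1))) := by
  intro P g zβ
  set n : ℕ := r - 1 with hn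
  have hn1 : 1 ≤ n := by omega
  have hq0 : (0:ℝ) < q := by positivity
  have hqne : (q:ℝ) ≠ 0 := ne_of_gt hq0
  set a : ℝ := (q:ℝ)⁻¹ with ha
  have ha0 : 0 < a := by positivity
  set c : ℝ := β * n * a ^ n with hc
  have hzβa : ∀ k, zβ k = a := fun k => one_div (q:ℝ)
  -- the limit value equals c
  have hlim : β * ((r:ℝ) - 1) / (q:ℝ) ^ (r - 1) = c := by
    have : ((r:ℝ) - 1) = (n:ℝ) := by
      rw [hn, Nat.cast_sub (by omega : 1 ≤ r)]; norm_num
    rw [this, hc, ha, inv_pow, div_eq_mul_inv]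
  rw [hlim]
  -- abbreviations
  set m : ℝ := β * ((n:ℝ) * a ^ (n - 1)) with hm
  set E : ℝ := Real.exp (β * a ^ n) with hE
  have hEpos : 0 < E := Real.exp_pos _
  have hEne : E ≠ 0 := ne_of_gt hEpos
  -- derivative of each exponential coordinate
  have hexp : ∀ k : Fin q, HasFDerivAt (fun z : Fin q → ℝ => Real.exp (β * z k ^ n))
      (E • (m • ContinuousLinearMap.proj (R := ℝ) (φ := fun _ : Fin q => ℝ) k)) zβ := by
    intro k
    have h1 : HasDerivAt (fun t : ℝ => β * t ^ n) m (zβ k) := by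
      rw [hzβa k]
      simpa [hm, mul_comm] using (hasDerivAt_pow n a).const_mul β
    have h2 : HasFDerivAt (fun z : Fin q → ℝ => z k)
        (ContinuousLinearMap.proj (R := ℝ) (φ := fun _ : Fin q => ℝ) k) zβ :=
      hasFDerivAt_apply k zβ
    have h3 := (h1.comp_hasFDerivAt zβ h2).exp
    simpa [Function.comp_def, hE, hzβa k] using h3
  -- derivative of the denominator
  have hS : HasFDerivAt (fun z : Fin q → ℝ => ∑ j, Real.exp (β * z j ^ n))
      (∑ j, E • (m • ContinuousLinearMap.proj (R := ℝ) (φ := fun _ : Fin q => ℝ) j)) zβ :=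
    HasFDerivAt.fun_sum (fun j _ => hexp j)
  have hSzβ : (∑ j, Real.exp (β * zβ j ^ n)) = q * E := by
    have h5 : ∀ j : Fin q, Real.exp (β * zβ j ^ n) = E := by
      intro j; rw [hzβa j, hE]
    rw [Finset.sum_congr rfl (fun j _ => h5 j), Finset.sum_const, Finset.card_univ,
      Fintype.card_fin, nsmul_eq_mul]
  have hSne : (∑ j, Real.exp (β * zβ j ^ n)) ≠ 0 := by
    rw [hSzβ]; positivity
  -- derivative of the inverse of the denominator
  have hSinv : HasFDerivAt (fun z : Fin q → ℝ => (∑ j, Real.exp (β * z j ^ n))⁻¹)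
      (-((((∑ j, Real.exp (β * zβ j ^ n)) ^ 2)⁻¹) •
        (∑ j, E • (m • ContinuousLinearMap.proj (R := ℝ) (φ := fun _ : Fin q => ℝ) j)))) zβ := by
    have h1 : HasDerivAt (fun t : ℝ => t⁻¹)
        (-(((∑ j, Real.exp (β * zβ j ^ n)) ^ 2)⁻¹)) ((fun z : Fin q → ℝ =>
          ∑ j, Real.exp (β * z j ^ n)) zβ) := hasDerivAt_inv hSne
    simpa [Function.comp_def] using h1.comp_hasFDerivAt zβ hS
  -- derivative of each coordinate of g
  have hgk : ∀ k : Fin q, HasFDerivAt (fun z : Fin q → ℝ => g z k)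
      (c • ContinuousLinearMap.proj (R := ℝ) (φ := fun _ : Fin q => ℝ) k
        - (c * a) • ∑ j, ContinuousLinearMap.proj (R := ℝ) (φ := fun _ : Fin q => ℝ) j) zβ := by
    intro k
    have hraw := (hexp k).mul hSinv
    have : HasFDerivAt (fun z : Fin q → ℝ =>
        Real.exp (β * z k ^ n) * (∑ j, Real.exp (β * z j ^ n))⁻¹)
        (c • ContinuousLinearMap.proj (R := ℝ) (φ := fun _ : Fin q => ℝ) k
          - (c * a) • ∑ j, ContinuousLinearMap.proj (R := ℝ) (φ := fun _ : Fin q => ℝ) j) zβ := by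
      refine hraw.congr_fderiv ?_
      ext h
      simp only [ContinuousLinearMap.add_apply, ContinuousLinearMap.smul_apply,
        ContinuousLinearMap.neg_apply, ContinuousLinearMap.sub_apply,
        ContinuousLinearMap.sum_apply, ContinuousLinearMap.proj_apply, smul_eq_mul,
        hSzβ, hzβa, ← hE]
      rw [← Finset.mul_sum, ← Finset.mul_sum]
      have hca : c = m * a := by
        rw [hc, hm]
        rcases Nat.exists_eq_add_of_le hn1 with ⟨t, ht⟩
        simp only [ht, Nat.add_sub_cancel_left, pow_succ]
        ring
      rw [hca, ha]
      simp only [Finset.sum_const, Finset.card_univ, Fintype.card_fin, nsmul_eq_mul]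
      field_simp
      ring
    have hfun : (fun z : Fin q → ℝ => g z k) = (fun z : Fin q → ℝ =>
        Real.exp (β * z k ^ n) * (∑ j, Real.exp (β * z j ^ n))⁻¹) := by
      funext z
      simp [g, div_eq_mul_inv, hn]
    rw [hfun]
    exact this
  -- full derivative
  set D : (Fin q → ℝ) →L[ℝ] (Fin q → ℝ) := ContinuousLinearMap.pi (fun k =>
      c • ContinuousLinearMap.proj (R := ℝ) (φ := fun _ : Fin q => ℝ) k
        - (c * a) • ∑ j, ContinuousLinearMap.proj (R := ℝ) (φ := fun _ : Fin q => ℝ) j) with hD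
  have hg : HasFDerivAt g D zβ := hasFDerivAt_pi.2 hgk
  -- little-o within the set
  have holittle : (fun z => g z - g zβ - D (z - zβ)) =o[nhdsWithin zβ (P \ {zβ})]
      (fun z => z - zβ) := hg.isLittleO.mono nhdsWithin_le_nhds
  have hsum0 : ∀ z ∈ P \ {zβ}, ∑ k, (z k - zβ k) = 0 := by
    intro z hz
    have h1 : ∑ k, z k = 1 := hz.1.2
    have h2 : ∑ k : Fin q, zβ k = 1 := by
      simp [zβ, Finset.sum_const, Finset.card_univ]
      field_simp
    rw [Finset.sum_sub_distrib, h1, h2, sub_self]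
  have hDc : ∀ z ∈ P \ {zβ}, D (z - zβ) = c • (z - zβ) := by
    intro z hz
    funext k
    have h0 := hsum0 z hz
    simp only [hD, ContinuousLinearMap.pi_apply, ContinuousLinearMap.sub_apply,
      ContinuousLinearMap.smul_apply, ContinuousLinearMap.sum_apply,
      ContinuousLinearMap.proj_apply, Pi.sub_apply, Pi.smul_apply, smul_eq_mul]
    rw [h0]
    ring
  have holittle2 : (fun z => g z - g zβ - c • (z - zβ)) =o[nhdsWithin zβ (P \ {zβ})]
      (fun z => z - zβ) := by
    refine holittle.congr' ?_ EventuallyEq.rfl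
    filter_upwards [self_mem_nhdsWithin] with z hz
    rw [hDc z hz]
  -- ratio of norms tends to zero
  have hT : Tendsto (fun z => ‖g z - g zβ - c • (z - zβ)‖ / ‖z - zβ‖)
      (nhdsWithin zβ (P \ {zβ})) (nhds 0) :=
    holittle2.norm_norm.tendsto_div_nhds_zero
  have hT' : Tendsto (fun z => (q:ℝ) * (‖g z - g zβ - c • (z - zβ)‖ / ‖z - zβ‖))
      (nhdsWithin zβ (P \ {zβ})) (nhds 0) := by
    simpa using hT.const_mul (q:ℝ)
  -- squeeze
  have hc0 : 0 ≤ c := by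
    rw [hc]; positivity
  have hsq : Tendsto (fun z : Fin q → ℝ =>
      (∑ k, |g z k - g zβ k|) / (∑ k, |z k - zβ k|) - c)
      (nhdsWithin zβ (P \ {zβ})) (nhds 0) := by
    refine squeeze_zero_norm' ?_ hT'
    filter_upwards [self_mem_nhdsWithin] with z hz
    have hzne : z ≠ zβ := fun h => hz.2 (by simp [h])
    have hznorm : 0 < ‖z - zβ‖ := by
      rw [norm_pos_iff]
      exact sub_ne_zero_of_ne hzne
    have hZsum : 0 < ∑ k, |z k - zβ k| := by
      obtain ⟨k, hk⟩ : ∃ k, z k ≠ zβ k := by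
        by_contra h
        push_neg at h
        exact hzne (funext h)
      refine lt_of_lt_of_le (abs_pos.2 (sub_ne_zero_of_ne hk)) ?_
      exact Finset.single_le_sum (f := fun j => |z j - zβ j|) (fun i _ => abs_nonneg _)
        (Finset.mem_univ k)
    have key1 : |(∑ k, |g z k - g zβ k|) - c * (∑ k, |z k - zβ k|)|
        ≤ ∑ k, |g z k - g zβ k - c * (z k - zβ k)| := by
      rw [Finset.mul_sum, ← Finset.sum_sub_distrib]
      refine le_trans (Finset.abs_sum_le_sum_abs _ _) ?_
      apply Finset.sum_le_sum
      intro k _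
      calc abs (abs (g z k - g zβ k) - c * abs (z k - zβ k))
          = abs (abs (g z k - g zβ k) - abs (c * (z k - zβ k))) := by
            rw [abs_mul, abs_of_nonneg hc0]
        _ ≤ |g z k - g zβ k - c * (z k - zβ k)| := abs_abs_sub_abs_le_abs_sub _ _
    have key2 : (∑ k, |g z k - g zβ k - c * (z k - zβ k)|)
        ≤ (q:ℝ) * ‖g z - g zβ - c • (z - zβ)‖ := by
      have : ∀ k, |g z k - g zβ k - c * (z k - zβ k)|
          ≤ ‖g z - g zβ - c • (z - zβ)‖ := by
        intro k
        have := norm_le_pi_norm (g z - g zβ - c • (z - zβ)) k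
        simpa [Real.norm_eq_abs] using this
      calc (∑ k, |g z k - g zβ k - c * (z k - zβ k)|)
          ≤ ∑ _k : Fin q, ‖g z - g zβ - c • (z - zβ)‖ :=
            Finset.sum_le_sum (fun k _ => this k)
        _ = (q:ℝ) * ‖g z - g zβ - c • (z - zβ)‖ := by
            simp [Finset.sum_const, Finset.card_univ]
    have key3 : ‖z - zβ‖ ≤ ∑ k, |z k - zβ k| := by
      refine (pi_norm_le_iff_of_nonneg (Finset.sum_nonneg fun i _ => abs_nonneg _)).2 ?_
      intro k
      have h4 : |z k - zβ k| ≤ ∑ j, |z j - zβ j| :=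
        Finset.single_le_sum (f := fun j => |z j - zβ j|) (fun i _ => abs_nonneg _)
          (Finset.mem_univ k)
      simpa [Real.norm_eq_abs] using h4
    have heq : (∑ k, |g z k - g zβ k|) / (∑ k, |z k - zβ k|) - c
        = ((∑ k, |g z k - g zβ k|) - c * (∑ k, |z k - zβ k|)) / (∑ k, |z k - zβ k|) := by
      field_simp
    rw [Real.norm_eq_abs, heq, abs_div, abs_of_pos hZsum]
    calc |(∑ k, |g z k - g zβ k|) - c * (∑ k, |z k - zβ k|)| / (∑ k, |z k - zβ k|)
        ≤ ((q:ℝ) * ‖g z - g zβ - c • (z - zβ)‖) / (∑ k, |z k - zβ k|) := by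
          exact (div_le_div_iff_of_pos_right hZsum).2 (key1.trans key2)
      _ ≤ ((q:ℝ) * ‖g z - g zβ - c • (z - zβ)‖) / ‖z - zβ‖ := by
          exact div_le_div_of_nonneg_left (by positivity) hznorm key3
      _ = (q:ℝ) * (‖g z - g zβ - c • (z - zβ)‖ / ‖z - zβ‖) := by ring
  have := hsq.add_const c
  simpa using this
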